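/- Let X be a normed space, Y a Banach space, K ⊆ Y a closed convex cone, k ∈ K, and let f : X → Y be strongly α(·)-k-paraconvex on an open convex set Ω ⊆ X. Let x₀ ∈ Ω and suppose the directional derivative f′(x₀;h) = lim_{t→0+}(f(x₀+th)−f(x₀))/t exists for every admissible direction h at x₀. Then f′(x₀;·) is sublinear and positively homogeneous: f′(x₀; h₁+h₂) ≤_K f′(x₀;h₁) + f′(x₀;h₂) whenever h₁, h₂ and h₁+h₂ are admissible at x₀, and f′(x₀; sh) = s·f′(x₀;h) for all s > 0 and admissible h. -/

import Mathlib

open Filter Topology Set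

/-- Let `f : X → Y` be strongly `α(·)`-`k`-paraconvex on an open convex
`Ω ⊆ X`, `x₀ ∈ Ω`, and suppose the directional derivative `f′(x₀;h)` (one-sided limit)
exists for every admissible direction `h` at `x₀`. Then `f′(x₀;·)` is sublinear:
`f′(x₀;h₁+h₂) ≤_K f′(x₀;h₁) + f′(x₀;h₂)` whenever `h₁`, `h₂`, `h₁+h₂` are admissible, and
positively homogeneous: `f′(x₀;sh) = s f′(x₀;h)` for `s > 0` and admissible `h`, `sh`. -/
theorem paraconvex_directional_derivative_sublinear
    {X Y : Type*} [NormedAddCommGroup X] [NormedSpace ℝ X]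
    [NormedAddCommGroup Y] [NormedSpace ℝ Y] [CompleteSpace Y]
    (K : Set Y) (hKclosed : IsClosed K) (hKconv : Convex ℝ K)
    (hKcone : ∀ ⦃c : ℝ⦄, 0 ≤ c → ∀ ⦃y⦄, y ∈ K → c • y ∈ K)
    (k : Y) (hk : k ∈ K)
    (Ω : Set X) (hΩopen : IsOpen Ω) (hΩconv : Convex ℝ Ω)
    (α : ℝ → ℝ) (hαnonneg : ∀ t, 0 ≤ t → 0 ≤ α t) (hαmono : MonotoneOn α (Ici 0))
    (hαlim : Tendsto (fun t => α t / t) (𝓝[>] (0 : ℝ)) (𝓝 0))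
    (f : X → Y) (hf : Continuous f) (C : ℝ) (hC : 0 ≤ C)
    (hpara : ∀ x ∈ Ω, ∀ y ∈ Ω, ∀ l : ℝ, 0 ≤ l → l ≤ 1 →
        l • f x + (1 - l) • f y + (C * min l (1 - l) * α ‖x - y‖) • k
          - f (l • x + (1 - l) • y) ∈ K)
    (x₀ : X) (hx₀ : x₀ ∈ Ω)
    (d : X → Y)
    (hd : ∀ h : X, (∃ ε > 0, ∀ t : ℝ, 0 < t → t < ε → x₀ + t • h ∈ Ω) →
        Tendsto (fun t : ℝ => t⁻¹ • (f (x₀ + t • h) - f x₀)) (𝓝[>] 0) (𝓝 (d h))) :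
    (∀ h₁ h₂ : X,
        (∃ ε > 0, ∀ t : ℝ, 0 < t → t < ε → x₀ + t • h₁ ∈ Ω) →
        (∃ ε > 0, ∀ t : ℝ, 0 < t → t < ε → x₀ + t • h₂ ∈ Ω) →
        (∃ ε > 0, ∀ t : ℝ, 0 < t → t < ε → x₀ + t • (h₁ + h₂) ∈ Ω) →
        d h₁ + d h₂ - d (h₁ + h₂) ∈ K)
      ∧ (∀ s : ℝ, 0 < s → ∀ h : X,
          (∃ ε > 0, ∀ t : ℝ, 0 < t → t < ε → x₀ + t • h ∈ Ω) →
          (∃ ε > 0, ∀ t : ℝ, 0 < t → t < ε → x₀ + t • (s • h) ∈ Ω) →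
          d (s • h) = s • d h) := by

  -- `α 0 = 0`
  have halpha0 : α 0 = 0 := by
    refine le_antisymm ?_ (hαnonneg 0 le_rfl)
    have key : ∀ ε : ℝ, 0 < ε → α 0 ≤ 0 + ε := by
      intro ε hε
      have h1 : ∀ᶠ t in 𝓝[>] (0:ℝ), α t / t < 1 :=
        hαlim (Iio_mem_nhds one_pos)
      have h2 : Ioo (0:ℝ) ε ∈ 𝓝[>] (0:ℝ) := Ioo_mem_nhdsGT_of_mem ⟨le_rfl, hε⟩
      obtain ⟨t, ht1, ht0, htε⟩ := (h1.and h2).exists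
      have : α t < t := (div_lt_one ht0).mp ht1
      calc α 0 ≤ α t := hαmono self_mem_Ici (le_of_lt ht0) ht0.le
        _ ≤ 0 + ε := by linarith
    linarith [le_of_forall_pos_le_add key]
  -- positive scaling maps 𝓝[>]0 to itself
  have hmul : ∀ c : ℝ, 0 < c → Tendsto (fun t : ℝ => c * t) (𝓝[>] 0) (𝓝[>] 0) := by
    intro c hc
    apply tendsto_nhdsWithin_of_tendsto_nhds_of_eventually_within
    · have := ((continuous_const.mul continuous_id).tendsto' (0:ℝ) 0 (by simp) : Tendsto (fun t : ℝ => c * t) (𝓝 0) (𝓝 0))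
      exact this.mono_left nhdsWithin_le_nhds
    · filter_upwards [self_mem_nhdsWithin] with t ht
      exact mul_pos hc ht
  constructor
  · rintro h₁ h₂ ⟨ε₁, hε₁, hΩ1⟩ ⟨ε₂, hε₂, hΩ2⟩ hadm3
    have hd1 := (hd h₁ ⟨ε₁, hε₁, hΩ1⟩).comp (hmul 2 two_pos)
    have hd2 := (hd h₂ ⟨ε₂, hε₂, hΩ2⟩).comp (hmul 2 two_pos)
    have hd3 := hd (h₁ + h₂) hadm3
    obtain ⟨ε₃, hε₃, hΩ3⟩ := hadm3
    -- the α-correction term tends to zero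
    have αlim : Tendsto (fun t : ℝ => t⁻¹ * (C * (1/2) * α ‖(2*t) • h₁ - (2*t) • h₂‖))
        (𝓝[>] 0) (𝓝 0) := by
      rcases eq_or_lt_of_le (norm_nonneg (h₁ - h₂)) with hr | hr
      · have : ∀ t : ℝ, t⁻¹ * (C * (1/2) * α ‖(2*t) • h₁ - (2*t) • h₂‖) = 0 := by
          intro t
          have : ‖(2*t) • h₁ - (2*t) • h₂‖ = 0 := by
            rw [← smul_sub, norm_smul, ← hr, mul_zero]
          rw [this, halpha0]; ring
        exact tendsto_const_nhds.congr (fun t => (this t).symm)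
      · set r := ‖h₁ - h₂‖ with hrdef
        have comp : Tendsto (fun t : ℝ => 2 * r * t) (𝓝[>] 0) (𝓝[>] 0) :=
          hmul (2*r) (by positivity)
        have main : Tendsto (fun t : ℝ => (C * r) * (α (2*r*t) / (2*r*t))) (𝓝[>] 0)
            (𝓝 ((C*r) * 0)) := ((hαlim.comp comp).const_mul (C*r))
        rw [mul_zero] at main
        refine main.congr' ?_
        filter_upwards [self_mem_nhdsWithin] with t ht
        have ht0 : (0:ℝ) < t := ht
        have hnorm : ‖(2*t) • h₁ - (2*t) • h₂‖ = 2*r*t := by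
          rw [← smul_sub, norm_smul, Real.norm_eq_abs, abs_of_pos (by linarith)]
          ring
        rw [hnorm]
        field_simp
    -- the combined quotient function
    have Ften : Tendsto (fun t : ℝ =>
        (2*t)⁻¹ • (f (x₀ + (2*t) • h₁) - f x₀) + (2*t)⁻¹ • (f (x₀ + (2*t) • h₂) - f x₀)
          - t⁻¹ • (f (x₀ + t • (h₁ + h₂)) - f x₀)
          + (t⁻¹ * (C * (1/2) * α ‖(2*t) • h₁ - (2*t) • h₂‖)) • k)
        (𝓝[>] 0) (𝓝 (d h₁ + d h₂ - d (h₁ + h₂) + (0:ℝ) • k)) :=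
      ((hd1.add hd2).sub hd3).add (αlim.smul_const k)
    rw [zero_smul, add_zero] at Ften
    refine hKclosed.mem_of_tendsto Ften ?_
    have hδ : 0 < min (min (ε₁/2) (ε₂/2)) ε₃ := by positivity
    filter_upwards [Ioo_mem_nhdsGT_of_mem ⟨le_rfl, hδ⟩] with t ht
    obtain ⟨ht0, htδ⟩ := ht
    have h2t1 : 2*t < ε₁ := by
      have := lt_of_lt_of_le htδ (le_trans (min_le_left _ _) (min_le_left _ _)); linarith
    have h2t2 : 2*t < ε₂ := by
      have := lt_of_lt_of_le htδ (le_trans (min_le_left _ _) (min_le_right _ _)); linarith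
    have ht3 : t < ε₃ := lt_of_lt_of_le htδ (min_le_right _ _)
    have hA : x₀ + (2*t) • h₁ ∈ Ω := hΩ1 _ (by linarith) h2t1
    have hB : x₀ + (2*t) • h₂ ∈ Ω := hΩ2 _ (by linarith) h2t2
    have hmem := hpara _ hA _ hB (1/2) (by norm_num) (by norm_num)
    have hmem' := hKcone (inv_nonneg.mpr ht0.le) hmem
    have hpt : ((1:ℝ)/2) • (x₀ + (2*t) • h₁) + ((1:ℝ) - 1/2) • (x₀ + (2*t) • h₂)
        = x₀ + t • (h₁ + h₂) := by module
    rw [hpt] at hmem'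
    have hmin : min ((1:ℝ)/2) ((1:ℝ) - 1/2) = 1/2 := by norm_num
    rw [hmin] at hmem'
    have hAB : (x₀ + (2*t) • h₁) - (x₀ + (2*t) • h₂) = (2*t) • h₁ - (2*t) • h₂ := by
      abel
    rw [hAB] at hmem'
    convert hmem' using 1
    rw [show ((2:ℝ)*t)⁻¹ = t⁻¹ * (1/2 : ℝ) by rw [mul_inv_rev]; ring]
    module
  · intro s hs h hadm hadm'
    have hds := hd (s • h) hadm'
    have comp : Tendsto (fun t : ℝ => t * s) (𝓝[>] 0) (𝓝[>] 0) :=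
      (hmul s hs).congr (fun t => mul_comm s t)
    have h2 : Tendsto (fun t : ℝ => s • ((t*s)⁻¹ • (f (x₀ + (t*s) • h) - f x₀)))
        (𝓝[>] 0) (𝓝 (s • d h)) := ((hd h hadm).comp comp).const_smul s
    refine tendsto_nhds_unique hds (h2.congr' ?_)
    filter_upwards [self_mem_nhdsWithin] with t ht
    have ht0 : (0:ℝ) < t := ht
    have hpt : t • (s • h) = (t*s) • h := smul_smul t s h
    rw [hpt, smul_smul]
    congr 1
    field_simp
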